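/- Let Σ ⊆ X and let δ, μ > 0 satisfy δ ≤ μ². Assume that for every f ∈ K there is g ∈ Σ ∩ K with ‖f − g‖_X ≤ δ. Let f ∈ K and w := λ(f). Suppose f̂ = ι(ĥ) with ĥ ∈ Y and ι(ĥ) ∈ Σ minimizes the loss, i.e. ‖λ(ι(ĥ)) − w‖ + μ‖ĥ‖_Y ≤ ‖λ(ι(h)) − w‖ + μ‖h‖_Y for every h ∈ Y with ι(h) ∈ Σ. Then, with ε := μ·max(C₀, 1+μ), one has ‖f − f̂‖_X ≤ ε + 2 R(K(w, 2ε))_X. -/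

import Mathlib

/-- Chebyshev radius of a set `S` in a normed space `X`:
`R(S) = inf_{z ∈ X} sup_{f ∈ S} ‖f - z‖`. -/
noncomputable def chebRad {X : Type*} [NormedAddCommGroup X] (S : Set X) : ℝ :=
  ⨅ z : X, ⨆ f : S, ‖(f : X) - z‖

/-- Weighted euclidean norm on `ℝ^m`: `‖v‖ = ( m⁻¹ ∑ v_j² )^{1/2}`. -/
noncomputable def wNorm {m : ℕ} (v : Fin m → ℝ) : ℝ :=
  Real.sqrt ((∑ j, v j ^ 2) / m)

lemma wNorm_nonneg {m : ℕ} (v : Fin m → ℝ) : 0 ≤ wNorm v := Real.sqrt_nonneg _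

lemma wNorm_le {m : ℕ} (hm : 0 < m) {v : Fin m → ℝ} {C : ℝ} (hC : 0 ≤ C)
    (h : ∀ j, |v j| ≤ C) : wNorm v ≤ C := by
  have h1 : (∑ j, v j ^ 2) / m ≤ C ^ 2 := by
    have h2 : ∑ j, v j ^ 2 ≤ ∑ _j : Fin m, C ^ 2 := by
      refine Finset.sum_le_sum fun j _ => ?_
      calc v j ^ 2 = |v j| ^ 2 := (sq_abs _).symm
        _ ≤ C ^ 2 := by gcongr; exact h j
    rw [Finset.sum_const, Finset.card_univ, Fintype.card_fin] at h2
    rw [div_le_iff₀ (by positivity)]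
    calc ∑ j, v j ^ 2 ≤ m • C ^ 2 := h2
      _ = C ^ 2 * m := by simp [mul_comm]
  calc wNorm v ≤ Real.sqrt (C ^ 2) := Real.sqrt_le_sqrt h1
    _ = C := Real.sqrt_sq hC

lemma wNorm_eq {m : ℕ} (v : Fin m → ℝ) :
    wNorm v = ‖(WithLp.equiv 2 (Fin m → ℝ)).symm v‖ / Real.sqrt m := by
  rw [EuclideanSpace.norm_eq, wNorm, Real.sqrt_div (by positivity)]
  simp [sq_abs]

lemma wNorm_triangle {m : ℕ} (a b : Fin m → ℝ) :
    wNorm (fun j => a j + b j) ≤ wNorm a + wNorm b := by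
  rw [wNorm_eq, wNorm_eq, wNorm_eq, ← add_div]
  gcongr
  calc ‖(WithLp.equiv 2 (Fin m → ℝ)).symm fun j => a j + b j‖
      = ‖(WithLp.equiv 2 (Fin m → ℝ)).symm a + (WithLp.equiv 2 (Fin m → ℝ)).symm b‖ := rfl
    _ ≤ _ := norm_add_le _ _

lemma dist_le_two_chebRad {X : Type*} [NormedAddCommGroup X] {S : Set X}
    (hb : Bornology.IsBounded S) {u v : X} (hu : u ∈ S) (hv : v ∈ S) :
    ‖u - v‖ ≤ 2 * chebRad S := by
  rw [← div_le_iff₀' (by norm_num : (0:ℝ) < 2)]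
  refine le_ciInf fun z => ?_
  obtain ⟨r, hr⟩ := isBounded_iff_forall_norm_le.mp hb
  have hbdd : BddAbove (Set.range fun f : S => ‖(f : X) - z‖) := by
    refine ⟨r + ‖z‖, ?_⟩
    rintro x ⟨⟨w, hw⟩, rfl⟩
    calc ‖w - z‖ ≤ ‖w‖ + ‖z‖ := norm_sub_le _ _
      _ ≤ r + ‖z‖ := by gcongr; exact hr w hw
  have h1 : ‖u - z‖ ≤ ⨆ f : S, ‖(f : X) - z‖ := le_ciSup hbdd ⟨u, hu⟩
  have h2 : ‖v - z‖ ≤ ⨆ f : S, ‖(f : X) - z‖ := le_ciSup hbdd ⟨v, hv⟩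
  have : ‖u - v‖ ≤ ‖u - z‖ + ‖v - z‖ := by
    calc ‖u - v‖ = ‖(u - z) - (v - z)‖ := by abel_nf
      _ ≤ _ := norm_sub_le _ _
  linarith

/-- Near optimality of the minimizer of the penalized loss
`g ↦ ‖λ(g) − w‖ + μ‖g‖_Y` over `Σ`, for the model class `K = ι(U(Y))`:
with `ε := μ·max(C₀, 1+μ)` one has `‖f − f̂‖_X ≤ ε + 2 R(K(w, 2ε))`. -/
theorem stmt_3
    {X Y : Type*} [NormedAddCommGroup X] [NormedSpace ℝ X] [CompleteSpace X]
    [NormedAddCommGroup Y] [NormedSpace ℝ Y]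
    {m : ℕ} (hm : 0 < m)
    (lam : Fin m → X →L[ℝ] ℝ) (hlam : ∀ j, ‖lam j‖ ≤ 1)
    (ι : Y →ₗ[ℝ] X) (hι : Function.Injective ι)
    (C₀ : ℝ) (hC₀ : ∀ g : Y, ‖ι g‖ ≤ C₀ * ‖g‖)
    (hK : IsCompact (ι '' {g : Y | ‖g‖ ≤ 1}))
    (Sig : Set X) (δ μ : ℝ) (hδ : 0 < δ) (hμ : 0 < μ) (hδμ : δ ≤ μ ^ 2)
    (happrox : ∀ f ∈ ι '' {g : Y | ‖g‖ ≤ 1},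
      ∃ g ∈ Sig ∩ ι '' {g : Y | ‖g‖ ≤ 1}, ‖f - g‖ ≤ δ)
    (f : X) (hf : f ∈ ι '' {g : Y | ‖g‖ ≤ 1})
    (fhat : Y) (hfhat : ι fhat ∈ Sig)
    (hmin : ∀ h : Y, ι h ∈ Sig →
      wNorm (fun j => lam j (ι fhat) - lam j f) + μ * ‖fhat‖ ≤
        wNorm (fun j => lam j (ι h) - lam j f) + μ * ‖h‖) :
    ‖f - ι fhat‖ ≤ μ * max C₀ (1 + μ) +
      2 * chebRad {u ∈ ι '' {g : Y | ‖g‖ ≤ 1} |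
        wNorm (fun j => lam j u - lam j f) ≤ 2 * (μ * max C₀ (1 + μ))} := by
  set K : Set X := ι '' {g : Y | ‖g‖ ≤ 1} with hKdef
  set ε : ℝ := μ * max C₀ (1 + μ) with hε
  have hε1 : μ * (1 + μ) ≤ ε := by
    apply mul_le_mul_of_nonneg_left (le_max_right _ _) hμ.le
  have hε0 : 0 < ε := lt_of_lt_of_le (by positivity) hε1
  -- bound wNorm of lam differences by the X-norm
  have hwlam : ∀ u v : X, wNorm (fun j => lam j u - lam j v) ≤ ‖u - v‖ := by
    intro u v
    refine wNorm_le hm (norm_nonneg _) fun j => ?_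
    have : lam j u - lam j v = lam j (u - v) := by simp
    rw [this]
    calc |lam j (u - v)| ≤ ‖lam j‖ * ‖u - v‖ := (lam j).le_opNorm _
      _ ≤ 1 * ‖u - v‖ := by gcongr; exact hlam j
      _ = ‖u - v‖ := one_mul _
  -- Step 1: near-optimality via the approximant of f
  obtain ⟨g, ⟨hgSig, h₀, hh₀, rfl⟩, hfg⟩ := happrox f hf
  have key := hmin h₀ hgSig
  have hRHS : wNorm (fun j => lam j (ι h₀) - lam j f) + μ * ‖h₀‖ ≤ μ ^ 2 + μ := by
    have h1 : wNorm (fun j => lam j (ι h₀) - lam j f) ≤ δ := by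
      calc wNorm (fun j => lam j (ι h₀) - lam j f) ≤ ‖ι h₀ - f‖ := hwlam _ _
        _ = ‖f - ι h₀‖ := norm_sub_rev _ _
        _ ≤ δ := hfg
    have h2 : μ * ‖h₀‖ ≤ μ := by
      calc μ * ‖h₀‖ ≤ μ * 1 := by gcongr; exact hh₀
        _ = μ := mul_one μ
    linarith
  have hA : wNorm (fun j => lam j (ι fhat) - lam j f) + μ * ‖fhat‖ ≤ μ * (1 + μ) := by
    have := key.trans hRHS; nlinarith
  have hB : wNorm (fun j => lam j (ι fhat) - lam j f) ≤ ε := by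
    have := mul_nonneg hμ.le (norm_nonneg fhat); linarith
  have hCn : ‖fhat‖ ≤ 1 + μ := by
    have h0 := wNorm_nonneg (fun j => lam j (ι fhat) - lam j f)
    have : μ * ‖fhat‖ ≤ μ * (1 + μ) := by linarith
    exact le_of_mul_le_mul_left this hμ
  -- Step 2: construct f' ∈ K close to ι fhat
  obtain ⟨f', hf'K, hdist, hwf'⟩ :
      ∃ f' ∈ K, ‖ι fhat - f'‖ ≤ ε ∧ wNorm (fun j => lam j f' - lam j f) ≤ 2 * ε := by
    by_cases h1 : ‖fhat‖ ≤ 1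
    · exact ⟨ι fhat, ⟨fhat, h1, rfl⟩, by simp [hε0.le], by linarith⟩
    · push_neg at h1
      have hpos : (0:ℝ) < ‖fhat‖ := lt_trans one_pos h1
      set t : ℝ := ‖fhat‖⁻¹ with ht
      refine ⟨ι (t • fhat), ⟨t • fhat, ?_, rfl⟩, ?_, ?_⟩
      · show ‖t • fhat‖ ≤ 1
        rw [norm_smul, ht, norm_inv, norm_norm, inv_mul_cancel₀ hpos.ne']
      · have hC₀0 : 0 ≤ C₀ := by
          have := hC₀ fhat
          nlinarith [norm_nonneg (ι fhat)]
        have heq : ι fhat - ι (t • fhat) = ι ((1 - t) • fhat) := by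
          simp [sub_smul]
        rw [heq]
        have ht1 : (1 - t) * ‖fhat‖ = ‖fhat‖ - 1 := by
          rw [ht, sub_mul, inv_mul_cancel₀ hpos.ne', one_mul]
        calc ‖ι ((1 - t) • fhat)‖ ≤ C₀ * ‖(1 - t) • fhat‖ := hC₀ _
          _ = C₀ * ((1 - t) * ‖fhat‖) := by
              rw [norm_smul, Real.norm_eq_abs, abs_of_nonneg]
              rw [sub_nonneg, ht]
              exact inv_le_one_of_one_le₀ h1.le
          _ = C₀ * (‖fhat‖ - 1) := by rw [ht1]
          _ ≤ C₀ * μ := by gcongr; linarith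
          _ = μ * C₀ := mul_comm _ _
          _ ≤ ε := mul_le_mul_of_nonneg_left (le_max_left _ _) hμ.le
      · have htri : wNorm (fun j => lam j (ι (t • fhat)) - lam j f) ≤
            wNorm (fun j => lam j (ι (t • fhat)) - lam j (ι fhat)) +
            wNorm (fun j => lam j (ι fhat) - lam j f) := by
          have := wNorm_triangle (fun j => lam j (ι (t • fhat)) - lam j (ι fhat))
            (fun j => lam j (ι fhat) - lam j f)
          simpa using this
        have h2 : wNorm (fun j => lam j (ι (t • fhat)) - lam j (ι fhat)) ≤ ε := by
          calc wNorm (fun j => lam j (ι (t • fhat)) - lam j (ι fhat))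
              ≤ ‖ι (t • fhat) - ι fhat‖ := hwlam _ _
            _ = ‖ι fhat - ι (t • fhat)‖ := norm_sub_rev _ _
            _ ≤ ε := by
                -- same bound as above; redo
                have hC₀0 : 0 ≤ C₀ := by
                  have := hC₀ fhat
                  nlinarith [norm_nonneg (ι fhat)]
                have heq : ι fhat - ι (t • fhat) = ι ((1 - t) • fhat) := by
                  simp [sub_smul]
                rw [heq]
                have ht1 : (1 - t) * ‖fhat‖ = ‖fhat‖ - 1 := by rw [ht, sub_mul, inv_mul_cancel₀ hpos.ne', one_mul]
                calc ‖ι ((1 - t) • fhat)‖ ≤ C₀ * ‖(1 - t) • fhat‖ := hC₀ _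
                  _ = C₀ * ((1 - t) * ‖fhat‖) := by
                      rw [norm_smul, Real.norm_eq_abs, abs_of_nonneg]
                      rw [sub_nonneg, ht]
                      exact inv_le_one_of_one_le₀ h1.le
                  _ = C₀ * (‖fhat‖ - 1) := by rw [ht1]
                  _ ≤ C₀ * μ := by gcongr; linarith
                  _ = μ * C₀ := mul_comm _ _
                  _ ≤ ε := mul_le_mul_of_nonneg_left (le_max_left _ _) hμ.le
        linarith
  -- Step 3: f and f' are in the constraint set S
  set S : Set X := {u ∈ K | wNorm (fun j => lam j u - lam j f) ≤ 2 * ε} with hS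
  have hfS : f ∈ S := by
    refine ⟨hf, ?_⟩
    have : (fun j => lam j f - lam j f) = fun _ => (0:ℝ) := by funext j; ring
    rw [this]
    have : wNorm (fun _ : Fin m => (0:ℝ)) = 0 := by simp [wNorm]
    rw [this]; positivity
  have hf'S : f' ∈ S := ⟨hf'K, hwf'⟩
  have hSb : Bornology.IsBounded S := hK.isBounded.subset (Set.sep_subset _ _)
  have hff' : ‖f - f'‖ ≤ 2 * chebRad S := dist_le_two_chebRad hSb hfS hf'S
  calc ‖f - ι fhat‖ ≤ ‖f - f'‖ + ‖f' - ι fhat‖ := by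
        have : f - ι fhat = (f - f') + (f' - ι fhat) := by abel
        rw [this]; exact norm_add_le _ _
    _ ≤ 2 * chebRad S + ε := by
        have : ‖f' - ι fhat‖ = ‖ι fhat - f'‖ := norm_sub_rev _ _
        linarith [this ▸ hdist]
    _ = ε + 2 * chebRad S := by ring
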